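/- For every integer r ≥ 3, the discus graph D_r is (3,6)-tight, where D_r is the graph obtained from an r-cycle by adding two new vertices each joined by an edge to all r cycle vertices. -/
import Mathlib


/-- A finite simple graph given by a vertex set and an edge set of unordered pairs. -/
structure FinGraph (α : Type*) [DecidableEq α] where
  verts : Finset α
  edges : Finset (Sym2 α)
  edge_mem : ∀ e ∈ edges, ∀ x ∈ e, x ∈ verts
  not_diag : ∀ e ∈ edges, ¬ e.IsDiag

namespace FinGraph

variable {α : Type*} [DecidableEq α]

/-- The Maxwell count `f(G) = 3|V| - |E|`. -/
def maxwell (G : FinGraph α) : ℤ := 3 * G.verts.card - G.edges.card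

/-- `H` is a subgraph of `G`. -/
def IsSubgraph (H G : FinGraph α) : Prop := H.verts ⊆ G.verts ∧ H.edges ⊆ G.edges

/-- `G` is (3,6)-sparse. -/
def Sparse (G : FinGraph α) : Prop :=
  ∀ H : FinGraph α, H.IsSubgraph G → 3 ≤ H.verts.card → 6 ≤ H.maxwell

/-- `G` is (3,6)-tight. -/
def Tight (G : FinGraph α) : Prop := Sparse G ∧ G.maxwell = 6

end FinGraph

lemma mod_succ_succ_ne {r j : ℕ} (hr : 3 ≤ r) (hj : j < r) : ((j+1) % r + 1) % r ≠ j := by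
  rcases Nat.lt_or_ge (j+1) r with h | h
  · rw [Nat.mod_eq_of_lt h]
    rcases Nat.lt_or_ge (j+2) r with h2 | h2
    · rw [Nat.mod_eq_of_lt h2]; omega
    · have h3 : j + 1 + 1 = (j + 2 - r) + 1 * r := by omega
      rw [h3, Nat.add_mul_mod_self_right, Nat.mod_eq_of_lt (by omega)]; omega
  · have hjr : j + 1 = r := by omega
    rw [hjr, Nat.mod_self, Nat.mod_eq_of_lt (by omega)]
    omega

lemma cycle_closed_eq {r : ℕ} (hr : 3 ≤ r) (S : Finset ℕ) (hS : S ⊆ Finset.range r)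
    (hne : S.Nonempty) (hcl : ∀ i ∈ S, (i + 1) % r ∈ S) : S = Finset.range r := by
  obtain ⟨i0, hi0⟩ := hne
  have hi0r : i0 < r := by simpa using hS hi0
  have key : ∀ m, (i0 + m) % r ∈ S := by
    intro m
    induction m with
    | zero => simpa [Nat.mod_eq_of_lt hi0r] using hi0
    | succ m ih =>
        have h1 : (i0 + (m + 1)) % r = ((i0 + m) % r + 1) % r := by
          rw [← Nat.add_assoc, Nat.add_mod (i0 + m) 1 r,
            Nat.mod_eq_of_lt (show 1 < r by omega)]
        rw [h1]
        exact hcl _ ih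
  refine Finset.Subset.antisymm hS (fun j hj => ?_)
  have hjr : j < r := Finset.mem_range.mp hj
  have h2 : i0 + (r - i0 + j) = r + j := by omega
  have := key (r - i0 + j)
  rwa [h2, Nat.add_mod_left, Nat.mod_eq_of_lt hjr] at this

/-- for every r ≥ 3 the discus graph D_r (an r-cycle plus two hub
vertices u, w joined to every cycle vertex, with u, w nonadjacent) is (3,6)-tight. -/
theorem discus_tight {α : Type*} [DecidableEq α]
    (r : ℕ) (hr : 3 ≤ r) (D : FinGraph α) (c : ℕ → α) (u w : α)
    (hc : Set.InjOn c (Set.Iio r))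
    (hu : ∀ i < r, u ≠ c i) (hw : ∀ i < r, w ≠ c i) (huw : u ≠ w)
    (hverts : D.verts = insert u (insert w ((Finset.range r).image c)))
    (hedges : D.edges =
      (Finset.range r).image (fun i => s(c i, c ((i + 1) % r)))
      ∪ (Finset.range r).image (fun i => s(u, c i))
      ∪ (Finset.range r).image (fun i => s(w, c i))) :
    D.Tight := by
  constructor
  · -- Sparse
    intro H hH h3
    obtain ⟨hHv, hHe⟩ := hH
    set A := (Finset.range r).image (fun i => s(c i, c ((i + 1) % r))) with hA
    set B := (Finset.range r).image (fun i => s(u, c i)) with hB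
    set C := (Finset.range r).image (fun i => s(w, c i)) with hC
    set S : Finset ℕ := (Finset.range r).filter (fun i => c i ∈ H.verts) with hSdef
    have hSsub : S ⊆ Finset.range r := Finset.filter_subset _ _
    have hSm : ∀ i, i ∈ S ↔ i < r ∧ c i ∈ H.verts := by
      intro i; simp [hSdef]
    set k := S.card with hk
    have hkr : k ≤ r := by
      calc k ≤ (Finset.range r).card := Finset.card_le_card hSsub
      _ = r := Finset.card_range r
    -- vertex set decomposition
    have hvert_eq : H.verts = (S.image c) ∪ ({u, w} ∩ H.verts) := by
      ext v; constructor
      · intro hv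
        have hv' := hHv hv; rw [hverts] at hv'
        simp only [Finset.mem_insert, Finset.mem_image, Finset.mem_range] at hv'
        rcases hv' with rfl | rfl | ⟨i, hi, rfl⟩
        · exact Finset.mem_union_right _ (by simp [hv])
        · exact Finset.mem_union_right _ (by simp [hv])
        · exact Finset.mem_union_left _ (Finset.mem_image_of_mem c ((hSm i).mpr ⟨hi, hv⟩))
      · intro hv
        rcases Finset.mem_union.mp hv with h | h
        · obtain ⟨i, hi, rfl⟩ := Finset.mem_image.mp h
          exact ((hSm i).mp hi).2
        · exact (Finset.mem_inter.mp h).2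
    have hdisj : Disjoint (S.image c) ({u, w} ∩ H.verts) := by
      rw [Finset.disjoint_left]
      rintro x hx hx2
      obtain ⟨i, hi, rfl⟩ := Finset.mem_image.mp hx
      have hir := ((hSm i).mp hi).1
      have h := (Finset.mem_inter.mp hx2).1
      simp only [Finset.mem_insert, Finset.mem_singleton] at h
      rcases h with h | h
      · exact hu i hir h.symm
      · exact hw i hir h.symm
    have hcard_img : (S.image c).card = k := by
      apply Finset.card_image_of_injOn
      intro x hx y hy hxy
      exact hc (by simpa using ((hSm x).mp hx).1) (by simpa using ((hSm y).mp hy).1) hxy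
    have hcard_uw : ({u, w} ∩ H.verts).card =
        (if u ∈ H.verts then 1 else 0) + (if w ∈ H.verts then 1 else 0) := by
      by_cases hu' : u ∈ H.verts <;> by_cases hw' : w ∈ H.verts <;>
        simp [Finset.insert_inter_of_mem, Finset.insert_inter_of_notMem,
          Finset.singleton_inter_of_mem, Finset.singleton_inter_of_notMem, hu', hw', huw]
    have hVcard : H.verts.card = k + ((if u ∈ H.verts then 1 else 0) + (if w ∈ H.verts then 1 else 0)) := by
      conv_lhs => rw [hvert_eq]
      rw [Finset.card_union_of_disjoint hdisj, hcard_img, hcard_uw]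
    -- edge count
    set T := S.filter (fun i => (i + 1) % r ∈ S) with hT
    have hTsub : T ⊆ S := Finset.filter_subset _ _
    have hEsplit : H.edges.card ≤ (H.edges ∩ A).card + (H.edges ∩ B).card + (H.edges ∩ C).card := by
      have h1 : H.edges = (H.edges ∩ A) ∪ (H.edges ∩ B) ∪ (H.edges ∩ C) := by
        rw [← Finset.inter_union_distrib_left, ← Finset.inter_union_distrib_left, ← hedges]
        exact (Finset.inter_eq_left.mpr hHe).symm
      calc H.edges.card = ((H.edges ∩ A) ∪ (H.edges ∩ B) ∪ (H.edges ∩ C)).card := by rw [← h1]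
        _ ≤ ((H.edges ∩ A) ∪ (H.edges ∩ B)).card + (H.edges ∩ C).card := Finset.card_union_le _ _
        _ ≤ (H.edges ∩ A).card + (H.edges ∩ B).card + (H.edges ∩ C).card := by
            have := Finset.card_union_le (H.edges ∩ A) (H.edges ∩ B); omega
    have hEA : (H.edges ∩ A).card ≤ T.card := by
      have hsub : H.edges ∩ A ⊆ T.image (fun i => s(c i, c ((i + 1) % r))) := by
        intro e he
        obtain ⟨he1, he2⟩ := Finset.mem_inter.mp he
        obtain ⟨i, hi, heq⟩ := Finset.mem_image.mp he2
        rw [Finset.mem_range] at hi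
        have hm1 : c i ∈ H.verts := H.edge_mem e he1 (c i) (by rw [← heq]; exact Sym2.mem_mk_left _ _)
        have hm2 : c ((i + 1) % r) ∈ H.verts :=
          H.edge_mem e he1 _ (by rw [← heq]; exact Sym2.mem_mk_right _ _)
        refine Finset.mem_image.mpr ⟨i, ?_, heq⟩
        exact Finset.mem_filter.mpr ⟨(hSm i).mpr ⟨hi, hm1⟩,
          (hSm _).mpr ⟨Nat.mod_lt _ (by omega), hm2⟩⟩
      exact (Finset.card_le_card hsub).trans Finset.card_image_le
    have hEB : (H.edges ∩ B).card ≤ (if u ∈ H.verts then k else 0) := by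
      by_cases hu' : u ∈ H.verts
      · rw [if_pos hu']
        have hsub : H.edges ∩ B ⊆ S.image (fun i => s(u, c i)) := by
          intro e he
          obtain ⟨he1, he2⟩ := Finset.mem_inter.mp he
          obtain ⟨i, hi, heq⟩ := Finset.mem_image.mp he2
          rw [Finset.mem_range] at hi
          have hm2 : c i ∈ H.verts := H.edge_mem e he1 _ (by rw [← heq]; exact Sym2.mem_mk_right _ _)
          exact Finset.mem_image.mpr ⟨i, (hSm i).mpr ⟨hi, hm2⟩, heq⟩
        calc (H.edges ∩ B).card ≤ (S.image (fun i => s(u, c i))).card := Finset.card_le_card hsub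
          _ ≤ k := Finset.card_image_le
      · rw [if_neg hu']
        have : H.edges ∩ B = ∅ := by
          apply Finset.eq_empty_of_forall_notMem
          intro e he
          obtain ⟨he1, he2⟩ := Finset.mem_inter.mp he
          obtain ⟨i, hi, heq⟩ := Finset.mem_image.mp he2
          exact hu' (H.edge_mem e he1 u (by rw [← heq]; exact Sym2.mem_mk_left _ _))
        simp [this]
    have hEC : (H.edges ∩ C).card ≤ (if w ∈ H.verts then k else 0) := by
      by_cases hw' : w ∈ H.verts
      · rw [if_pos hw']
        have hsub : H.edges ∩ C ⊆ S.image (fun i => s(w, c i)) := by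
          intro e he
          obtain ⟨he1, he2⟩ := Finset.mem_inter.mp he
          obtain ⟨i, hi, heq⟩ := Finset.mem_image.mp he2
          rw [Finset.mem_range] at hi
          have hm2 : c i ∈ H.verts := H.edge_mem e he1 _ (by rw [← heq]; exact Sym2.mem_mk_right _ _)
          exact Finset.mem_image.mpr ⟨i, (hSm i).mpr ⟨hi, hm2⟩, heq⟩
        calc (H.edges ∩ C).card ≤ (S.image (fun i => s(w, c i))).card := Finset.card_le_card hsub
          _ ≤ k := Finset.card_image_le
      · rw [if_neg hw']
        have : H.edges ∩ C = ∅ := by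
          apply Finset.eq_empty_of_forall_notMem
          intro e he
          obtain ⟨he1, he2⟩ := Finset.mem_inter.mp he
          obtain ⟨i, hi, heq⟩ := Finset.mem_image.mp he2
          exact hw' (H.edge_mem e he1 w (by rw [← heq]; exact Sym2.mem_mk_left _ _))
        simp [this]
    -- cycle edge count bounds
    have hTk : T.card ≤ k := Finset.card_le_card hTsub
    have hTk' : k < r → T.card ≤ k - 1 := by
      intro hlt
      rcases S.eq_empty_or_nonempty with hSe | hSne
      · have : T = ∅ := Finset.subset_empty.mp (hSe ▸ hTsub)
        simp [this]
      · have hSne' : S ≠ Finset.range r := by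
          intro h; rw [hk, h, Finset.card_range] at hlt; omega
        have hex : ¬ ∀ i ∈ S, (i + 1) % r ∈ S := fun h =>
          hSne' (cycle_closed_eq hr S hSsub hSne h)
        push_neg at hex
        obtain ⟨i0, hi0, hi0'⟩ := hex
        have hsub : T ⊆ S.erase i0 := by
          intro j hj
          obtain ⟨hj1, hj2⟩ := Finset.mem_filter.mp hj
          refine Finset.mem_erase.mpr ⟨?_, hj1⟩
          rintro rfl; exact hi0' hj2
        calc T.card ≤ (S.erase i0).card := Finset.card_le_card hsub
          _ = k - 1 := by rw [Finset.card_erase_of_mem hi0]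
    -- final arithmetic
    rw [FinGraph.maxwell, hVcard]
    rw [hVcard] at h3
    by_cases hu' : u ∈ H.verts <;> by_cases hw' : w ∈ H.verts <;>
      simp only [hu', hw', if_true, if_false, if_pos, if_neg] at * <;>
      rcases eq_or_lt_of_le hkr with heq | hlt
    all_goals try { have := hTk' hlt; push_cast; omega }
    all_goals push_cast; omega
  · -- maxwell = 6
    have hcinj : ∀ i j, i < r → j < r → c i = c j → i = j := fun i j hi hj h => hc hi hj h
    have hrange : Set.InjOn c ↑(Finset.range r) := by rw [Finset.coe_range]; exact hc
    have hWimg : w ∉ (Finset.range r).image c := by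
      simp only [Finset.mem_image, Finset.mem_range, not_exists]
      intro i hi; exact hw i hi.1 hi.2.symm
    have hUins : u ∉ insert w ((Finset.range r).image c) := by
      simp only [Finset.mem_insert, Finset.mem_image, Finset.mem_range, not_or, not_exists]
      exact ⟨huw, fun i hi => hu i hi.1 hi.2.symm⟩
    have hvcard : D.verts.card = r + 2 := by
      rw [hverts, Finset.card_insert_of_notMem hUins, Finset.card_insert_of_notMem hWimg,
        Finset.card_image_of_injOn hrange, Finset.card_range]
    -- edge cards
    have hAcard : ((Finset.range r).image (fun i => s(c i, c ((i + 1) % r)))).card = r := by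
      rw [Finset.card_image_of_injOn, Finset.card_range]
      intro i hi j hj hij
      simp only [Finset.coe_range, Set.mem_Iio] at hi hj
      rw [Sym2.eq_iff] at hij
      rcases hij with ⟨h1, _⟩ | ⟨h1, h2⟩
      · exact hcinj _ _ hi hj h1
      · have hi1 : i = (j+1) % r := hcinj _ _ hi (Nat.mod_lt _ (by omega)) h1
        have hj1 : (i+1) % r = j := hcinj _ _ (Nat.mod_lt _ (by omega)) hj h2
        rw [hi1] at hj1
        exact absurd hj1 (mod_succ_succ_ne hr hj)
    have hBcard : ((Finset.range r).image (fun i => s(u, c i))).card = r := by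
      rw [Finset.card_image_of_injOn, Finset.card_range]
      intro i hi j hj hij
      simp only [Finset.coe_range, Set.mem_Iio] at hi hj
      rw [Sym2.eq_iff] at hij
      rcases hij with ⟨_, h2⟩ | ⟨h1, _⟩
      · exact hcinj _ _ hi hj h2
      · exact absurd h1 (hu j hj)
    have hCcard : ((Finset.range r).image (fun i => s(w, c i))).card = r := by
      rw [Finset.card_image_of_injOn, Finset.card_range]
      intro i hi j hj hij
      simp only [Finset.coe_range, Set.mem_Iio] at hi hj
      rw [Sym2.eq_iff] at hij
      rcases hij with ⟨_, h2⟩ | ⟨h1, _⟩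
      · exact hcinj _ _ hi hj h2
      · exact absurd h1 (hw j hj)
    have hAB : Disjoint ((Finset.range r).image (fun i => s(c i, c ((i + 1) % r))))
        ((Finset.range r).image (fun i => s(u, c i))) := by
      rw [Finset.disjoint_left]
      rintro e heA heB
      obtain ⟨i, hi, rfl⟩ := Finset.mem_image.mp heA
      obtain ⟨j, hj, he⟩ := Finset.mem_image.mp heB
      rw [Finset.mem_range] at hi hj
      rw [Sym2.eq_iff] at he
      rcases he with ⟨h1, _⟩ | ⟨h1, _⟩
      · exact hu i hi h1
      · exact hu _ (Nat.mod_lt _ (by omega)) h1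
    have hAC : Disjoint ((Finset.range r).image (fun i => s(c i, c ((i + 1) % r))))
        ((Finset.range r).image (fun i => s(w, c i))) := by
      rw [Finset.disjoint_left]
      rintro e heA heB
      obtain ⟨i, hi, rfl⟩ := Finset.mem_image.mp heA
      obtain ⟨j, hj, he⟩ := Finset.mem_image.mp heB
      rw [Finset.mem_range] at hi hj
      rw [Sym2.eq_iff] at he
      rcases he with ⟨h1, _⟩ | ⟨h1, _⟩
      · exact hw i hi h1
      · exact hw _ (Nat.mod_lt _ (by omega)) h1
    have hBC : Disjoint ((Finset.range r).image (fun i => s(u, c i)))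
        ((Finset.range r).image (fun i => s(w, c i))) := by
      rw [Finset.disjoint_left]
      rintro e heA heB
      obtain ⟨i, hi, rfl⟩ := Finset.mem_image.mp heA
      obtain ⟨j, hj, he⟩ := Finset.mem_image.mp heB
      rw [Finset.mem_range] at hi hj
      rw [Sym2.eq_iff] at he
      rcases he with ⟨h1, _⟩ | ⟨h1, h2⟩
      · exact huw h1.symm
      · exact hu j hj h2.symm
    have hecard : D.edges.card = 3 * r := by
      rw [hedges, Finset.union_assoc, Finset.card_union_of_disjoint, hAcard,
        Finset.card_union_of_disjoint hBC, hBcard, hCcard]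
      · ring
      · rw [Finset.disjoint_union_right]; exact ⟨hAB, hAC⟩
    rw [FinGraph.maxwell, hvcard, hecard]
    push_cast
    ring
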